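/- arXiv:1708.05862 — 2 statements merged into one kernel-verified Lean document; each statement's English description precedes it below -/
import Mathlib

section
/- Let A, B, X be n×n complex matrices and let f₁, f₂, g₁, g₂ : [0,∞) → [0,∞) be continuous functions satisfying f₁(t)f₂(t) = t and g₁(t)g₂(t) = t for all t ≥ 0. Then ‖A X B*‖² ≤ ‖f₁(A*A) X g₁(B*B)‖ · ‖f₂(A*A) X g₂(B*B)‖. -/
open scoped Matrix Matrix.Norms.L2Operator
open scoped ENNReal NNReal

noncomputable instance auxMatrixCStarAlgebra {d : ℕ} :
    CStarAlgebra (Matrix (Fin d) (Fin d) ℂ) :=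
  { Matrix.instL2OpNormedRing, Matrix.instCStarRing,
    Matrix.instL2OpNormedAlgebra (𝕜 := ℂ),
    (inferInstance : StarRing (Matrix (Fin d) (Fin d) ℂ)),
    (inferInstance : CompleteSpace (Matrix (Fin d) (Fin d) ℂ)),
    (inferInstance : StarModule ℂ (Matrix (Fin d) (Fin d) ℂ)) with }

lemma aux_iSup_diff_zero (s : Set ℂ) :
    ⨆ k ∈ s, (‖k‖₊ : ℝ≥0∞) = ⨆ k ∈ s \ {0}, (‖k‖₊ : ℝ≥0∞) := by
  apply le_antisymm
  · refine iSup₂_le fun k hk => ?_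
    by_cases h : k = 0
    · simp [h]
    · exact le_iSup₂ (f := fun k (_ : k ∈ s \ {0}) => (‖k‖₊ : ℝ≥0∞)) k ⟨hk, h⟩
  · exact iSup₂_le fun k hk => le_iSup₂ (f := fun k (_ : k ∈ s) => (‖k‖₊ : ℝ≥0∞)) k hk.1

lemma aux_spectralRadius_mul_comm {A : Type*} [NormedRing A] [NormedAlgebra ℂ A]
    (a b : A) : spectralRadius ℂ (a * b) = spectralRadius ℂ (b * a) := by
  unfold spectralRadius
  rw [aux_iSup_diff_zero, aux_iSup_diff_zero (spectrum ℂ (b * a)),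
    spectrum.nonzero_mul_comm]


/-- **Theorem 2.1.** For `n × n` complex matrices `A, B, X` and non-negative continuous
functions `f₁, f₂, g₁, g₂` on `[0, ∞)` with `f₁ t * f₂ t = t` and `g₁ t * g₂ t = t`,
the operator norm satisfies
`‖A X B*‖² ≤ ‖f₁(A*A) X g₁(B*B)‖ * ‖f₂(A*A) X g₂(B*B)‖`. -/
theorem stmt_0 {d : ℕ} (A B X : Matrix (Fin d) (Fin d) ℂ)
    (f₁ f₂ g₁ g₂ : ℝ → ℝ)
    (hf₁ : ContinuousOn f₁ (Set.Ici 0)) (hf₂ : ContinuousOn f₂ (Set.Ici 0))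
    (hg₁ : ContinuousOn g₁ (Set.Ici 0)) (hg₂ : ContinuousOn g₂ (Set.Ici 0))
    (hf₁0 : ∀ t ∈ Set.Ici (0 : ℝ), 0 ≤ f₁ t) (hf₂0 : ∀ t ∈ Set.Ici (0 : ℝ), 0 ≤ f₂ t)
    (hg₁0 : ∀ t ∈ Set.Ici (0 : ℝ), 0 ≤ g₁ t) (hg₂0 : ∀ t ∈ Set.Ici (0 : ℝ), 0 ≤ g₂ t)
    (hf : ∀ t ∈ Set.Ici (0 : ℝ), f₁ t * f₂ t = t)
    (hg : ∀ t ∈ Set.Ici (0 : ℝ), g₁ t * g₂ t = t) :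
    ‖A * X * Bᴴ‖ ^ 2 ≤
      ‖cfc f₁ (Aᴴ * A) * X * cfc g₁ (Bᴴ * B)‖ * ‖cfc f₂ (Aᴴ * A) * X * cfc g₂ (Bᴴ * B)‖ := by
  rcases Nat.eq_zero_or_pos d with rfl | hd
  · have h0 : ∀ Y : Matrix (Fin 0) (Fin 0) ℂ, Y = 0 := fun Y => Subsingleton.elim _ _
    rw [h0 (A * X * Bᴴ), h0 (cfc f₁ (Aᴴ * A) * X * cfc g₁ (Bᴴ * B))]
    simp
  haveI : Nonempty (Fin d) := ⟨⟨0, hd⟩⟩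
  haveI : Nontrivial (Matrix (Fin d) (Fin d) ℂ) := inferInstance
  set P := Aᴴ * A with hPdef
  set Q := Bᴴ * B with hQdef
  have hsA : star A = Aᴴ := rfl
  have hsB : star B = Bᴴ := rfl
  have hPspec : spectrum ℝ P ⊆ Set.Ici 0 := fun x hx =>
    spectrum_star_mul_self_nonneg (b := A) x (by rw [hsA]; exact hx)
  have hQspec : spectrum ℝ Q ⊆ Set.Ici 0 := fun x hx =>
    spectrum_star_mul_self_nonneg (b := B) x (by rw [hsB]; exact hx)
  have hP : IsSelfAdjoint P := by rw [hPdef, ← hsA]; exact IsSelfAdjoint.star_mul_self A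
  have hQ : IsSelfAdjoint Q := by rw [hQdef, ← hsB]; exact IsSelfAdjoint.star_mul_self B
  have hPfac : cfc f₂ P * cfc f₁ P = P := by
    rw [← cfc_mul f₂ f₁ P (hf₂.mono hPspec) (hf₁.mono hPspec)]
    rw [cfc_congr (g := id) fun x hx => by
      simpa [mul_comm (f₂ x)] using hf x (hPspec hx)]
    exact cfc_id ℝ P hP
  have hQfac : cfc g₁ Q * cfc g₂ Q = Q := by
    rw [← cfc_mul g₁ g₂ Q (hg₁.mono hQspec) (hg₂.mono hQspec)]
    rw [cfc_congr (g := id) fun x hx => hg x (hQspec hx)]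
    exact cfc_id ℝ Q hQ
  have hf₂sa : IsSelfAdjoint (cfc f₂ P) := cfc_predicate f₂ P
  have hg₂sa : IsSelfAdjoint (cfc g₂ Q) := cfc_predicate g₂ Q
  set M := A * X * Bᴴ with hM
  set C := cfc f₁ P * X * cfc g₁ Q with hC
  set D := cfc f₂ P * X * cfc g₂ Q with hD
  have hMsa : IsSelfAdjoint (star M * M) := IsSelfAdjoint.star_mul_self M
  have hkey : star M * M = (B * Xᴴ * cfc f₂ P) * (cfc f₁ P * X * Bᴴ) := by
    have h1 : star M = B * Xᴴ * Aᴴ := by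
      simp [hM, Matrix.star_eq_conjTranspose, Matrix.conjTranspose_mul, mul_assoc]
    rw [h1, hM]
    calc B * Xᴴ * Aᴴ * (A * X * Bᴴ) = B * Xᴴ * (Aᴴ * A) * X * Bᴴ := by noncomm_ring
      _ = B * Xᴴ * (cfc f₂ P * cfc f₁ P) * X * Bᴴ := by rw [hPfac]
      _ = B * Xᴴ * cfc f₂ P * (cfc f₁ P * X * Bᴴ) := by noncomm_ring
  have hkey2 : (cfc f₁ P * X * Bᴴ) * (B * Xᴴ * cfc f₂ P) = C * star D := by
    have hsD : star D = cfc g₂ Q * Xᴴ * cfc f₂ P := by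
      rw [hD, star_mul, star_mul, hg₂sa.star_eq, hf₂sa.star_eq,
        Matrix.star_eq_conjTranspose, mul_assoc]
    rw [hsD, hC]
    calc cfc f₁ P * X * Bᴴ * (B * Xᴴ * cfc f₂ P)
        = cfc f₁ P * X * (Bᴴ * B) * (Xᴴ * cfc f₂ P) := by noncomm_ring
      _ = cfc f₁ P * X * (cfc g₁ Q * cfc g₂ Q) * (Xᴴ * cfc f₂ P) := by rw [hQfac]
      _ = cfc f₁ P * X * cfc g₁ Q * (cfc g₂ Q * Xᴴ * cfc f₂ P) := by noncomm_ring
  haveI : NormedStarGroup (Matrix (Fin d) (Fin d) ℂ) :=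
    CStarRing.to_normedStarGroup
  have hr : (‖star M * M‖₊ : ℝ≥0∞) ≤ (‖C‖₊ : ℝ≥0∞) * ‖D‖₊ := by
    calc (‖star M * M‖₊ : ℝ≥0∞) = spectralRadius ℂ (star M * M) :=
          hMsa.spectralRadius_eq_nnnorm.symm
      _ = spectralRadius ℂ (C * star D) := by
          rw [hkey, aux_spectralRadius_mul_comm, hkey2]
      _ ≤ ‖C * star D‖₊ := spectrum.spectralRadius_le_nnnorm (𝕜 := ℂ) _
      _ ≤ ((‖C‖₊ * ‖star D‖₊ : ℝ≥0) : ℝ≥0∞) := ENNReal.coe_le_coe.mpr (nnnorm_mul_le C (star D))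
      _ = (‖C‖₊ : ℝ≥0∞) * ‖D‖₊ := by rw [nnnorm_star, ENNReal.coe_mul]
  have hr' : ‖star M * M‖ ≤ ‖C‖ * ‖D‖ := by
    rw [← ENNReal.coe_mul] at hr
    have h2 : ‖star M * M‖₊ ≤ ‖C‖₊ * ‖D‖₊ := by exact_mod_cast hr
    exact_mod_cast h2
  calc ‖M‖ ^ 2 = ‖star M * M‖ := by rw [CStarRing.norm_star_mul_self, sq]
    _ ≤ ‖C‖ * ‖D‖ := hr'
end

section
/- Let A, B, X be n×n complex matrices with A and B invertible, let m, n, s, t be real numbers with m + n = 1 and s + t = 1, and let |||·||| be a unitarily invariant norm on n×n complex matrices. Then |||A X B*|||² ≤ |||(A*A)^m X (B*B)^s||| · |||(A*A)^n X (B*B)^t|||. -/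
open scoped Matrix

namespace Stmt4Aux

lemma threeLinesAux {E : Type*} [NormedAddCommGroup E] [NormedSpace ℂ E]
    (f : ℂ → E) (hf : Differentiable ℂ f)
    (hre : ∀ z : ℂ, ‖f z‖ = ‖f (z.re : ℂ)‖) :
    ‖f ((1/2 : ℝ) : ℂ)‖ ^ 2 ≤ ‖f 0‖ * ‖f 1‖ := by
  have hd : DiffContOnCl ℂ f (Complex.HadamardThreeLines.verticalStrip 0 1) := hf.diffContOnCl
  have hcont : Continuous fun x : ℝ => ‖f (x : ℂ)‖ :=
    (continuous_norm.comp hf.continuous).comp Complex.continuous_ofReal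
  have hcomp : IsCompact ((fun x : ℝ => ‖f (x : ℂ)‖) '' Set.Icc 0 1) :=
    (isCompact_Icc).image hcont
  have hB : BddAbove ((norm ∘ f) '' Complex.HadamardThreeLines.verticalClosedStrip 0 1) := by
    refine hcomp.bddAbove.mono ?_
    rintro y ⟨z, hz, rfl⟩
    exact ⟨z.re, hz, (hre z).symm⟩
  have ha : ∀ z ∈ Complex.re ⁻¹' {0}, ‖f z‖ ≤ ‖f 0‖ := by
    intro z hz
    rw [hre z]
    simp only [Set.mem_preimage, Set.mem_singleton_iff] at hz
    rw [hz]
    simp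
  have hb : ∀ z ∈ Complex.re ⁻¹' {1}, ‖f z‖ ≤ ‖f 1‖ := by
    intro z hz
    rw [hre z]
    simp only [Set.mem_preimage, Set.mem_singleton_iff] at hz
    rw [hz]
    simp
  have hz : ((1/2 : ℝ) : ℂ) ∈ Complex.HadamardThreeLines.verticalClosedStrip 0 1 := by
    simp [Complex.HadamardThreeLines.verticalClosedStrip]
    norm_num
  have main := Complex.HadamardThreeLines.norm_le_interp_of_mem_verticalClosedStrip' (f := f) zero_lt_one hz hd hB ha hb
  rw [Complex.ofReal_re, sub_zero, sub_zero, div_one] at main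
  have h0 : (0:ℝ) ≤ ‖f 0‖ := norm_nonneg _
  have h1 : (0:ℝ) ≤ ‖f 1‖ := norm_nonneg _
  have hle := pow_le_pow_left₀ (norm_nonneg _) main 2
  refine hle.trans (le_of_eq ?_)
  rw [mul_pow, ← Real.rpow_natCast (‖f 0‖ ^ (1 - 1/2 : ℝ)) 2,
    ← Real.rpow_natCast (‖f 1‖ ^ (1/2 : ℝ)) 2, ← Real.rpow_mul h0, ← Real.rpow_mul h1]
  norm_num

open Complex

def NMat (d : ℕ) : Type := Matrix (Fin d) (Fin d) ℂ

variable {d : ℕ}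

lemma star_exp_mul_I (c : ℝ) : star (Complex.exp ((c:ℂ) * I)) * Complex.exp ((c:ℂ) * I) = 1 := by
  have h : star (Complex.exp ((c:ℂ) * I)) = Complex.exp (-((c:ℂ) * I)) := by
    rw [show star (Complex.exp ((c:ℂ) * I)) = (starRingEnd ℂ) (Complex.exp ((c:ℂ) * I)) from rfl,
      ← Complex.exp_conj, map_mul, Complex.conj_I, Complex.conj_ofReal, mul_neg]
  rw [h, ← Complex.exp_add, neg_add_cancel, Complex.exp_zero]

lemma diagonal_eq_sum (g : Fin d → ℂ) :
    Matrix.diagonal g = ∑ i, g i • Matrix.single i i (1:ℂ) := by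
  ext a b
  rw [Matrix.sum_apply]
  by_cases h : a = b
  · subst h
    simp [Matrix.single, Matrix.diagonal_apply_eq, eq_comm]
  · rw [Matrix.diagonal_apply_ne _ h]
    refine (Finset.sum_eq_zero fun i _ => ?_).symm
    simp only [Matrix.smul_apply, Matrix.single, Matrix.of_apply, smul_eq_mul]
    rw [if_neg, mul_zero]
    rintro ⟨rfl, rfl⟩
    exact h rfl

lemma diagonal_mem_unitary {φ : Fin d → ℂ} (hφ : ∀ i, star (φ i) * φ i = 1) :
    Matrix.diagonal φ ∈ Matrix.unitaryGroup (Fin d) ℂ := by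
  rw [Matrix.mem_unitaryGroup_iff']
  have hs : star (Matrix.diagonal φ) = Matrix.diagonal (star φ) := by
    rw [Matrix.star_eq_conjTranspose, Matrix.diagonal_conjTranspose]
  rw [hs, Matrix.diagonal_mul_diagonal]
  have : (fun i => star φ i * φ i) = fun _ => (1:ℂ) := funext fun i => hφ i
  rw [this]
  exact Matrix.diagonal_one

lemma conj_mul' {U : Matrix (Fin d) (Fin d) ℂ} (h : star U * U = 1)
    (D₁ D₂ : Matrix (Fin d) (Fin d) ℂ) :
    U * (D₁ * D₂) * star U = (U * D₁ * star U) * (U * D₂ * star U) := by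
  simp only [Matrix.mul_assoc]
  rw [← Matrix.mul_assoc (star U) U, h, Matrix.one_mul]

lemma core (N : Matrix (Fin d) (Fin d) ℂ → ℝ)
    (hN_add : ∀ C D, N (C + D) ≤ N C + N D)
    (hN_smul : ∀ (c : ℂ) C, N (c • C) = ‖c‖ * N C)
    (hN_pos : ∀ C, C ≠ 0 → 0 < N C)
    (hN_unitary : ∀ U V C, U ∈ Matrix.unitaryGroup (Fin d) ℂ →
      V ∈ Matrix.unitaryGroup (Fin d) ℂ → N (U * C * V) = N C)
    (X U V : Matrix (Fin d) (Fin d) ℂ)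
    (hU : U ∈ Matrix.unitaryGroup (Fin d) ℂ) (hV : V ∈ Matrix.unitaryGroup (Fin d) ℂ)
    (e f : Fin d → ℝ) (he : ∀ i, 0 < e i) (hf : ∀ j, 0 < f j)
    (m n s t : ℝ) (hmn : m + n = 1) (hst : s + t = 1) :
    N ((U * Matrix.diagonal (fun i => ((e i ^ ((1:ℝ)/2) : ℝ) : ℂ)) * star U) * X *
        (V * Matrix.diagonal (fun j => ((f j ^ ((1:ℝ)/2) : ℝ) : ℂ)) * star V)) ^ 2 ≤
      N ((U * Matrix.diagonal (fun i => ((e i ^ m : ℝ) : ℂ)) * star U) * X *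
          (V * Matrix.diagonal (fun j => ((f j ^ s : ℝ) : ℂ)) * star V)) *
        N ((U * Matrix.diagonal (fun i => ((e i ^ n : ℝ) : ℂ)) * star U) * X *
            (V * Matrix.diagonal (fun j => ((f j ^ t : ℝ) : ℂ)) * star V)) := by
  have hU' : star U * U = 1 := Unitary.star_mul_self_of_mem hU
  have hV' : star V * V = 1 := Unitary.star_mul_self_of_mem hV
  set α : ℂ → ℂ := fun z => (m : ℂ) + z * ((n : ℝ) - (m : ℝ)) with hα
  set β : ℂ → ℂ := fun z => (s : ℂ) + z * ((t : ℝ) - (s : ℝ)) with hβ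
  set F : ℂ → Matrix (Fin d) (Fin d) ℂ := fun z =>
    (U * Matrix.diagonal (fun i => Complex.exp ((Real.log (e i) : ℂ) * α z)) * star U) * X *
    (V * Matrix.diagonal (fun j => Complex.exp ((Real.log (f j) : ℂ) * β z)) * star V) with hF
  -- evaluation at real points
  have heval : ∀ (x r₁ r₂ : ℝ), m + x * (n - m) = r₁ → s + x * (t - s) = r₂ →
      F (x : ℂ) = (U * Matrix.diagonal (fun i => ((e i ^ r₁ : ℝ) : ℂ)) * star U) * X *
        (V * Matrix.diagonal (fun j => ((f j ^ r₂ : ℝ) : ℂ)) * star V) := by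
    intro x r₁ r₂ h1 h2
    have hg : (fun i => Complex.exp ((Real.log (e i) : ℂ) * α (x : ℂ)))
        = fun i => ((e i ^ r₁ : ℝ) : ℂ) := by
      funext i
      have : (Real.log (e i) : ℂ) * α (x : ℂ) = ((Real.log (e i) * r₁ : ℝ) : ℂ) := by
        rw [hα]; push_cast [← h1]; ring
      rw [this, ← Complex.ofReal_exp, ← Real.rpow_def_of_pos (he i)]
    have hh : (fun j => Complex.exp ((Real.log (f j) : ℂ) * β (x : ℂ)))
        = fun j => ((f j ^ r₂ : ℝ) : ℂ) := by
      funext j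
      have : (Real.log (f j) : ℂ) * β (x : ℂ) = ((Real.log (f j) * r₂ : ℝ) : ℂ) := by
        rw [hβ]; push_cast [← h2]; ring
      rw [this, ← Complex.ofReal_exp, ← Real.rpow_def_of_pos (hf j)]
    simp only [hF, hg, hh]
  -- phase invariance
  have hre : ∀ z : ℂ, N (F z) = N (F (z.re : ℂ)) := by
    intro z
    set φ : Fin d → ℂ := fun i => Complex.exp ((Real.log (e i) * ((n - m) * z.im) : ℝ) * I) with hφdef
    set ψ : Fin d → ℂ := fun j => Complex.exp ((Real.log (f j) * ((t - s) * z.im) : ℝ) * I) with hψdef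
    have hφ : ∀ i, star (φ i) * φ i = 1 := fun i => star_exp_mul_I _
    have hψ : ∀ j, star (ψ j) * ψ j = 1 := fun j => star_exp_mul_I _
    have hz : z = (z.re : ℂ) + (z.im : ℂ) * I := (Complex.re_add_im z).symm
    have hgsplit : (fun i => Complex.exp ((Real.log (e i) : ℂ) * α z))
        = fun i => φ i * Complex.exp ((Real.log (e i) : ℂ) * α (z.re : ℂ)) := by
      funext i
      rw [hφdef]
      have harg : (Real.log (e i) : ℂ) * α z
          = ((Real.log (e i) * ((n - m) * z.im) : ℝ) * I)
            + (Real.log (e i) : ℂ) * α (z.re : ℂ) := by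
        rw [hα]
        push_cast
        nth_rewrite 1 [hz]
        ring
      rw [harg, Complex.exp_add]
    have hhsplit : (fun j => Complex.exp ((Real.log (f j) : ℂ) * β z))
        = fun j => Complex.exp ((Real.log (f j) : ℂ) * β (z.re : ℂ)) * ψ j := by
      funext j
      rw [hψdef]
      have harg : (Real.log (f j) : ℂ) * β z
          = (Real.log (f j) : ℂ) * β (z.re : ℂ)
            + ((Real.log (f j) * ((t - s) * z.im) : ℝ) * I) := by
        rw [hβ]
        push_cast
        nth_rewrite 1 [hz]
        ring
      rw [harg, Complex.exp_add]
    have hW1 : U * Matrix.diagonal φ * star U ∈ Matrix.unitaryGroup (Fin d) ℂ :=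
      mul_mem (mul_mem hU (diagonal_mem_unitary hφ)) (Unitary.star_mem hU)
    have hW2 : V * Matrix.diagonal ψ * star V ∈ Matrix.unitaryGroup (Fin d) ℂ :=
      mul_mem (mul_mem hV (diagonal_mem_unitary hψ)) (Unitary.star_mem hV)
    have hFz : F z = (U * Matrix.diagonal φ * star U) * F (z.re : ℂ)
        * (V * Matrix.diagonal ψ * star V) := by
      simp only [hF, hgsplit, hhsplit, ← Matrix.diagonal_mul_diagonal]
      rw [conj_mul' hU', conj_mul' hV']
      simp only [Matrix.mul_assoc]
    rw [hFz]
    exact hN_unitary _ _ _ hW1 hW2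
  -- sum decomposition
  have hFsum : ∀ z : ℂ, F z = ∑ i, ∑ j,
      (Complex.exp ((Real.log (e i) : ℂ) * α z) * Complex.exp ((Real.log (f j) : ℂ) * β z)) •
        ((U * Matrix.single i i 1 * star U) * X *
          (V * Matrix.single j j 1 * star V)) := by
    intro z
    simp only [hF, diagonal_eq_sum]
    simp only [Finset.mul_sum, Finset.sum_mul, Matrix.mul_smul, Matrix.smul_mul, smul_smul,
      Finset.smul_sum]
    rw [Finset.sum_comm]
    refine Finset.sum_congr rfl fun i _ => Finset.sum_congr rfl fun j _ => ?_
    rw [mul_comm]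
  -- normed space structure from N
  letI : AddCommGroup (NMat d) := inferInstanceAs (AddCommGroup (Matrix (Fin d) (Fin d) ℂ))
  letI : Module ℂ (NMat d) := inferInstanceAs (Module ℂ (Matrix (Fin d) (Fin d) ℂ))
  letI : NormedAddCommGroup (NMat d) := AddGroupNorm.toNormedAddCommGroup
    { toFun := fun C => N C
      map_zero' := by have h := hN_smul 0 0; simp at h; exact h
      add_le' := hN_add
      neg' := fun C => by have h := hN_smul (-1) C; simp only [norm_neg, norm_one, one_mul] at h; rw [← h]; congr 1; exact (neg_one_smul ℂ _).symm
      eq_zero_of_map_eq_zero' := fun C hC => by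
        by_contra h
        exact (hN_pos C h).ne' hC }
  letI : NormedSpace ℂ (NMat d) := NormedSpace.mk (fun c C => le_of_eq (hN_smul c C))
  set G : ℂ → NMat d := F with hG
  have hGnorm : ∀ z, ‖G z‖ = N (F z) := fun z => rfl
  have hGdiff : Differentiable ℂ G := by
    have hGeq : G = fun z => ∑ i, ∑ j,
        (Complex.exp ((Real.log (e i) : ℂ) * α z) * Complex.exp ((Real.log (f j) : ℂ) * β z)) •
          (((U * Matrix.single i i 1 * star U) * X *
            (V * Matrix.single j j 1 * star V) : Matrix (Fin d) (Fin d) ℂ) : NMat d) :=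
      funext fun z => hFsum z
    rw [hGeq]
    apply Differentiable.fun_sum
    intro i _
    apply Differentiable.fun_sum
    intro j _
    have hαd : Differentiable ℂ α := by
      rw [hα]
      exact (differentiable_const _).add (differentiable_id.mul (differentiable_const _))
    have hβd : Differentiable ℂ β := by
      rw [hβ]
      exact (differentiable_const _).add (differentiable_id.mul (differentiable_const _))
    have h1 : Differentiable ℂ (fun z => Complex.exp ((Real.log (e i) : ℂ) * α z)) :=
      Complex.differentiable_exp.comp ((differentiable_const _).mul hαd)
    have h2 : Differentiable ℂ (fun z => Complex.exp ((Real.log (f j) : ℂ) * β z)) :=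
      Complex.differentiable_exp.comp ((differentiable_const _).mul hβd)
    exact (h1.mul h2).smul_const _
  have hGre : ∀ z : ℂ, ‖G z‖ = ‖G (z.re : ℂ)‖ := by
    intro z
    rw [hGnorm, hGnorm]
    exact hre z
  have key := threeLinesAux G hGdiff hGre
  have h0 : F 0 = (U * Matrix.diagonal (fun i => ((e i ^ m : ℝ) : ℂ)) * star U) * X *
      (V * Matrix.diagonal (fun j => ((f j ^ s : ℝ) : ℂ)) * star V) := by
    rw [← Complex.ofReal_zero]
    exact heval 0 m s (by ring) (by ring)
  have h1 : F 1 = (U * Matrix.diagonal (fun i => ((e i ^ n : ℝ) : ℂ)) * star U) * X *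
      (V * Matrix.diagonal (fun j => ((f j ^ t : ℝ) : ℂ)) * star V) := by
    rw [← Complex.ofReal_one]
    exact heval 1 n t (by ring) (by ring)
  have hhalf : F ((1/2 : ℝ) : ℂ) =
      (U * Matrix.diagonal (fun i => ((e i ^ ((1:ℝ)/2) : ℝ) : ℂ)) * star U) * X *
      (V * Matrix.diagonal (fun j => ((f j ^ ((1:ℝ)/2) : ℝ) : ℂ)) * star V) :=
    heval (1/2) ((1:ℝ)/2) ((1:ℝ)/2) (by linarith) (by linarith)
  calc N ((U * Matrix.diagonal (fun i => ((e i ^ ((1:ℝ)/2) : ℝ) : ℂ)) * star U) * X *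
        (V * Matrix.diagonal (fun j => ((f j ^ ((1:ℝ)/2) : ℝ) : ℂ)) * star V)) ^ 2
      = ‖G ((1/2 : ℝ) : ℂ)‖ ^ 2 := by rw [hGnorm, hhalf]
    _ ≤ ‖G 0‖ * ‖G 1‖ := key
    _ = _ := by rw [hGnorm, hGnorm, h0, h1]

end Stmt4Aux

open Stmt4Aux

/-- **Theorem 3.2.** For `n × n` complex matrices `A, B, X` with `A, B` invertible, real
numbers `m + n = 1`, `s + t = 1`, and any unitarily invariant norm `N`:
`N(A X B*)² ≤ N((A*A)^m X (B*B)^s) * N((A*A)^n X (B*B)^t)`. -/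
theorem stmt_4 {d : ℕ} (A B X : Matrix (Fin d) (Fin d) ℂ)
    (hA : IsUnit A) (hB : IsUnit B)
    (m n s t : ℝ) (hmn : m + n = 1) (hst : s + t = 1)
    (N : Matrix (Fin d) (Fin d) ℂ → ℝ)
    (hN_add : ∀ C D, N (C + D) ≤ N C + N D)
    (hN_smul : ∀ (c : ℂ) C, N (c • C) = ‖c‖ * N C)
    (hN_pos : ∀ C, C ≠ 0 → 0 < N C)
    (hN_unitary : ∀ U V C, U ∈ Matrix.unitaryGroup (Fin d) ℂ →
      V ∈ Matrix.unitaryGroup (Fin d) ℂ → N (U * C * V) = N C) :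
    N (A * X * Bᴴ) ^ 2 ≤
      N (cfc (fun x : ℝ => x ^ m) (Aᴴ * A) * X * cfc (fun x : ℝ => x ^ s) (Bᴴ * B)) *
        N (cfc (fun x : ℝ => x ^ n) (Aᴴ * A) * X * cfc (fun x : ℝ => x ^ t) (Bᴴ * B)) := by
  classical
  have hP : (Aᴴ * A).IsHermitian := Matrix.isHermitian_conjTranspose_mul_self A
  have hQ : (Bᴴ * B).IsHermitian := Matrix.isHermitian_conjTranspose_mul_self B
  set e : Fin d → ℝ := hP.eigenvalues with he_def
  set f : Fin d → ℝ := hQ.eigenvalues with hf_def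
  set U : Matrix (Fin d) (Fin d) ℂ := (hP.eigenvectorUnitary : Matrix (Fin d) (Fin d) ℂ) with hU_def
  set V : Matrix (Fin d) (Fin d) ℂ := (hQ.eigenvectorUnitary : Matrix (Fin d) (Fin d) ℂ) with hV_def
  have hU : U ∈ Matrix.unitaryGroup (Fin d) ℂ := (hP.eigenvectorUnitary).2
  have hV : V ∈ Matrix.unitaryGroup (Fin d) ℂ := (hQ.eigenvectorUnitary).2
  have hU' : star U * U = 1 := Unitary.star_mul_self_of_mem hU
  have hUU : U * star U = 1 := Unitary.mul_star_self_of_mem hU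
  have hV' : star V * V = 1 := Unitary.star_mul_self_of_mem hV
  have hVV : V * star V = 1 := Unitary.mul_star_self_of_mem hV
  -- positivity of eigenvalues
  have hdet : ∀ (C : Matrix (Fin d) (Fin d) ℂ), IsUnit C →
      ∀ (hC : (Cᴴ * C).IsHermitian) (i : Fin d), 0 < hC.eigenvalues i := by
    intro C hCu hC i
    have hnn : 0 ≤ hC.eigenvalues i := Matrix.eigenvalues_conjTranspose_mul_self_nonneg C i
    refine lt_of_le_of_ne hnn (Ne.symm ?_)
    intro h0
    have hd : (Cᴴ * C).det ≠ 0 := by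
      rw [Matrix.det_mul, Matrix.det_conjTranspose]
      have : C.det ≠ 0 := by
        have := (Matrix.isUnit_iff_isUnit_det C).mp hCu
        exact this.ne_zero
      exact mul_ne_zero (star_ne_zero.mpr this) this
    rw [hC.det_eq_prod_eigenvalues] at hd
    rw [Finset.prod_ne_zero_iff] at hd
    have := hd i (Finset.mem_univ i)
    rw [h0] at this
    simp at this
  have he : ∀ i, 0 < e i := hdet A hA hP
  have hf : ∀ j, 0 < f j := hdet B hB hQ
  -- cfc identification
  have hcfc : ∀ (r : ℝ), cfc (fun x : ℝ => x ^ r) (Aᴴ * A)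
      = U * Matrix.diagonal (fun i => ((e i ^ r : ℝ) : ℂ)) * star U := by
    intro r
    rw [hP.cfc_eq]
    rfl
  have hcfc' : ∀ (r : ℝ), cfc (fun x : ℝ => x ^ r) (Bᴴ * B)
      = V * Matrix.diagonal (fun j => ((f j ^ r : ℝ) : ℂ)) * star V := by
    intro r
    rw [hQ.cfc_eq]
    rfl
  -- abbreviations
  set CA : ℝ → Matrix (Fin d) (Fin d) ℂ :=
    fun r => U * Matrix.diagonal (fun i => ((e i ^ r : ℝ) : ℂ)) * star U with hCA_def
  set CB : ℝ → Matrix (Fin d) (Fin d) ℂ :=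
    fun r => V * Matrix.diagonal (fun j => ((f j ^ r : ℝ) : ℂ)) * star V with hCB_def
  have hCA_mul : ∀ r r', CA r * CA r' = CA (r + r') := by
    intro r r'
    rw [hCA_def]
    simp only
    rw [← conj_mul' hU', Matrix.diagonal_mul_diagonal]
    have hfun : (fun i => ((e i ^ r : ℝ) : ℂ) * ((e i ^ r' : ℝ) : ℂ))
        = fun i => ((e i ^ (r + r') : ℝ) : ℂ) := by
      funext i
      rw [← Complex.ofReal_mul, ← Real.rpow_add (he i)]
    rw [hfun]
  have hCB_mul : ∀ r r', CB r * CB r' = CB (r + r') := by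
    intro r r'
    rw [hCB_def]
    simp only
    rw [← conj_mul' hV', Matrix.diagonal_mul_diagonal]
    have hfun : (fun j => ((f j ^ r : ℝ) : ℂ) * ((f j ^ r' : ℝ) : ℂ))
        = fun j => ((f j ^ (r + r') : ℝ) : ℂ) := by
      funext j
      rw [← Complex.ofReal_mul, ← Real.rpow_add (hf j)]
    rw [hfun]
  have hCA0 : CA 0 = 1 := by
    rw [hCA_def]
    simp only
    have : (fun i => ((e i ^ (0:ℝ) : ℝ) : ℂ)) = fun _ => (1:ℂ) := by
      funext i; simp [Real.rpow_zero]
    rw [this, Matrix.diagonal_one, Matrix.mul_one, hUU]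
  have hCB0 : CB 0 = 1 := by
    rw [hCB_def]
    simp only
    have : (fun j => ((f j ^ (0:ℝ) : ℝ) : ℂ)) = fun _ => (1:ℂ) := by
      funext j; simp [Real.rpow_zero]
    rw [this, Matrix.diagonal_one, Matrix.mul_one, hVV]
  have hCA_star : ∀ r, star (CA r) = CA r := by
    intro r
    rw [hCA_def]
    simp only
    rw [star_mul, star_mul, star_star]
    have : star (Matrix.diagonal (fun i => ((e i ^ r : ℝ) : ℂ)))
        = Matrix.diagonal (fun i => ((e i ^ r : ℝ) : ℂ)) := by
      rw [Matrix.star_eq_conjTranspose, Matrix.diagonal_conjTranspose]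
      have hsf : star (fun i => ((e i ^ r : ℝ) : ℂ)) = fun i => ((e i ^ r : ℝ) : ℂ) := by
        funext i
        simp [Pi.star_apply, Complex.conj_ofReal]
      rw [hsf]
    rw [this, Matrix.mul_assoc]
  have hCB_star : ∀ r, star (CB r) = CB r := by
    intro r
    rw [hCB_def]
    simp only
    rw [star_mul, star_mul, star_star]
    have : star (Matrix.diagonal (fun j => ((f j ^ r : ℝ) : ℂ)))
        = Matrix.diagonal (fun j => ((f j ^ r : ℝ) : ℂ)) := by
      rw [Matrix.star_eq_conjTranspose, Matrix.diagonal_conjTranspose]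
      have hsf : star (fun j => ((f j ^ r : ℝ) : ℂ)) = fun j => ((f j ^ r : ℝ) : ℂ) := by
        funext j
        simp [Pi.star_apply, Complex.conj_ofReal]
      rw [hsf]
    rw [this, Matrix.mul_assoc]
  have hspecA : Aᴴ * A = CA 1 := by
    rw [hCA_def]
    simp only
    have : (fun i => ((e i ^ (1:ℝ) : ℝ) : ℂ)) = RCLike.ofReal ∘ e := by
      funext i; simp [Real.rpow_one]
    rw [this]
    exact hP.spectral_theorem
  have hspecB : Bᴴ * B = CB 1 := by
    rw [hCB_def]
    simp only
    have : (fun j => ((f j ^ (1:ℝ) : ℝ) : ℂ)) = RCLike.ofReal ∘ f := by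
      funext j; simp [Real.rpow_one]
    rw [this]
    exact hQ.spectral_theorem
  -- polar decomposition
  set Wa : Matrix (Fin d) (Fin d) ℂ := A * CA (-(1/2)) with hWa_def
  set Wb : Matrix (Fin d) (Fin d) ℂ := B * CB (-(1/2)) with hWb_def
  have hWa_mem : Wa ∈ Matrix.unitaryGroup (Fin d) ℂ := by
    rw [Matrix.mem_unitaryGroup_iff']
    rw [hWa_def, star_mul, hCA_star, Matrix.star_eq_conjTranspose]
    calc CA (-(1/2)) * Aᴴ * (A * CA (-(1/2)))
        = CA (-(1/2)) * (Aᴴ * A) * CA (-(1/2)) := by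
          simp only [Matrix.mul_assoc]
      _ = CA (-(1/2)) * CA 1 * CA (-(1/2)) := by rw [hspecA]
      _ = 1 := by rw [hCA_mul, hCA_mul]; norm_num [hCA0]
  have hWb_mem : Wb ∈ Matrix.unitaryGroup (Fin d) ℂ := by
    rw [Matrix.mem_unitaryGroup_iff']
    rw [hWb_def, star_mul, hCB_star, Matrix.star_eq_conjTranspose]
    calc CB (-(1/2)) * Bᴴ * (B * CB (-(1/2)))
        = CB (-(1/2)) * (Bᴴ * B) * CB (-(1/2)) := by
          simp only [Matrix.mul_assoc]
      _ = CB (-(1/2)) * CB 1 * CB (-(1/2)) := by rw [hspecB]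
      _ = 1 := by rw [hCB_mul, hCB_mul]; norm_num [hCB0]
  have hA_eq : A = Wa * CA (1/2) := by
    rw [hWa_def, Matrix.mul_assoc, hCA_mul]
    norm_num [hCA0]
  have hB_eq : B = Wb * CB (1/2) := by
    rw [hWb_def, Matrix.mul_assoc, hCB_mul]
    norm_num [hCB0]
  have hNeq : N (A * X * Bᴴ) = N (CA (1/2) * X * CB (1/2)) := by
    have hBH : Bᴴ = CB (1/2) * star Wb := by
      rw [← Matrix.star_eq_conjTranspose]
      nth_rewrite 1 [hB_eq]
      rw [star_mul, hCB_star]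
    have : A * X * Bᴴ = Wa * (CA (1/2) * X * CB (1/2)) * star Wb := by
      nth_rewrite 1 [hA_eq]
      rw [hBH]
      simp only [Matrix.mul_assoc]
    rw [this]
    exact hN_unitary _ _ _ hWa_mem (Unitary.star_mem hWb_mem)
  have hkey := core N hN_add hN_smul hN_pos hN_unitary X U V hU hV e f he hf m n s t hmn hst
  rw [hcfc m, hcfc n, hcfc' s, hcfc' t, hNeq]
  have h12 : ((1:ℝ)/2) = (1/2 : ℝ) := rfl
  exact hkey
end
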